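/- Let n ≥ 2 be an even integer, and for each i ∈ {1,…,n} let Y_i : {0,1} × [0,1] → ℝ be a fixed potential-outcome function that is L-Lipschitz in its second argument, i.e. |Y_i(z, ρ) − Y_i(z, ρ′)| ≤ L·|ρ − ρ′| for all z ∈ {0,1} and ρ, ρ′ ∈ [0,1]. Fix ρ ∈ [0,1] and interference levels ρ_1,…,ρ_n ∈ [0,1], and let Z = (Z_1,…,Z_n) be uniformly distributed over all vectors in {0,1}^n with exactly n/2 coordinates equal to 1. Define τ̂ = (2/n)·Σ_i Y_i(Z_i, ρ_i)·Z_i − (2/n)·Σ_i Y_i(Z_i, ρ_i)·(1 − Z_i), let a_i = Y_i(1, ρ) + Y_i(0, ρ) with mean ā = n^{−1}Σ_i a_i and sample variance S[a] = (n−1)^{−1}Σ_i (a_i − ā)², let Y_max = max_i |a_i − ā|, and let Δ₁ = Σ_i |ρ_i − ρ|. Then |Var[τ̂] − (1/n)·S[a]| ≤ (4/(n(n−1)))·(L·Y_max·Δ₁ + L²·Δ₁²). -/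

import Mathlib

open Finset

/-- The completely randomized design: the set of binary assignment vectors on `n` units
with exactly `n/2` treated. -/
def crdSet (n : ℕ) : Finset (Fin n → Bool) :=
  Finset.univ.filter fun z => (Finset.univ.filter fun i => z i = true).card = n / 2

/-- Expectation of `f` under the uniform distribution on `crdSet n`. -/
noncomputable def crdExp (n : ℕ) (f : (Fin n → Bool) → ℝ) : ℝ :=
  (∑ z ∈ crdSet n, f z) / (crdSet n).card

/-- Real-valued treatment indicator. -/
def ind (b : Bool) : ℝ := if b then 1 else 0



lemma card_filter_comp {n : ℕ} (e : Equiv.Perm (Fin n)) (z : Fin n → Bool) :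
    (Finset.univ.filter fun i => z (e i) = true).card
      = (Finset.univ.filter fun i => z i = true).card := by
  apply Finset.card_bij (fun i _ => e i)
  · intro i hi; simp only [mem_filter, mem_univ, true_and] at hi ⊢; exact hi
  · intro i _ j _ h; exact e.injective h
  · intro j hj
    refine ⟨e.symm j, ?_, by simp⟩
    simp only [mem_filter, mem_univ, true_and] at hj ⊢
    simpa using hj

lemma mem_crd_comp {n : ℕ} (e : Equiv.Perm (Fin n)) {z : Fin n → Bool}
    (hz : z ∈ crdSet n) : (fun i => z (e i)) ∈ crdSet n := by
  simp only [crdSet, mem_filter, mem_univ, true_and] at hz ⊢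
  rw [card_filter_comp e z]; exact hz

lemma sum_comp_perm {n : ℕ} (e : Equiv.Perm (Fin n)) (f : (Fin n → Bool) → ℝ) :
    ∑ z ∈ crdSet n, f (fun i => z (e i)) = ∑ z ∈ crdSet n, f z := by
  apply Finset.sum_nbij' (i := fun z => fun k => z (e k)) (j := fun z => fun k => z (e.symm k))
  · intro z hz; exact mem_crd_comp e hz
  · intro z hz; exact mem_crd_comp e.symm hz
  · intro z _; funext k; simp
  · intro z _; funext k; simp
  · intro z _; rfl

lemma crd_nonempty {n : ℕ} (hn : 2 ≤ n) : (crdSet n).Nonempty := by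
  have hmn : n / 2 < n := Nat.div_lt_self (by omega) (by omega)
  refine ⟨fun i => decide ((i : ℕ) < n / 2), ?_⟩
  simp only [crdSet, mem_filter, mem_univ, true_and, decide_eq_true_eq]
  have : (Finset.univ.filter fun i : Fin n => (i : ℕ) < n / 2)
      = Finset.Iio (⟨n / 2, hmn⟩ : Fin n) := by
    ext i; simp [Fin.lt_def]
  rw [this]
  simp


lemma sum_ind_mem {n : ℕ} {z : Fin n → Bool} (hz : z ∈ crdSet n) :
    ∑ i, ind (z i) = ((n / 2 : ℕ) : ℝ) := by
  simp only [crdSet, mem_filter, mem_univ, true_and] at hz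
  rw [← hz]
  rw [show (∑ i, ind (z i)) = ∑ i, if z i = true then (1:ℝ) else 0 by
    exact Finset.sum_congr rfl fun i _ => by cases z i <;> simp [ind]]
  rw [Finset.sum_boole]

lemma half_cast {n : ℕ} (hev : Even n) : ((n / 2 : ℕ) : ℝ) * 2 = (n : ℝ) := by
  obtain ⟨k, hk⟩ := hev
  subst hk
  rw [show k + k = 2 * k by ring, Nat.mul_div_cancel_left _ (by norm_num)]
  push_cast; ring

lemma sum_ind {n : ℕ} (hn : 2 ≤ n) (hev : Even n) (i : Fin n) :
    ∑ z ∈ crdSet n, ind (z i) = ((crdSet n).card : ℝ) / 2 := by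
  have hconst : ∀ j : Fin n, ∑ z ∈ crdSet n, ind (z j) = ∑ z ∈ crdSet n, ind (z i) := by
    intro j
    have := sum_comp_perm (Equiv.swap i j) (fun z => ind (z i))
    simpa using this
  have hsum : (n : ℝ) * (∑ z ∈ crdSet n, ind (z i))
      = ((crdSet n).card : ℝ) * ((n / 2 : ℕ) : ℝ) := by
    calc (n : ℝ) * (∑ z ∈ crdSet n, ind (z i))
        = ∑ j : Fin n, ∑ z ∈ crdSet n, ind (z j) := by
          rw [Finset.sum_congr rfl fun j _ => hconst j, Finset.sum_const]
          simp [mul_comm]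
      _ = ∑ z ∈ crdSet n, ∑ j : Fin n, ind (z j) := Finset.sum_comm
      _ = ∑ z ∈ crdSet n, ((n / 2 : ℕ) : ℝ) := Finset.sum_congr rfl fun z hz => sum_ind_mem hz
      _ = ((crdSet n).card : ℝ) * ((n / 2 : ℕ) : ℝ) := by
          rw [Finset.sum_const]; simp [mul_comm]
  have h2 := half_cast hev
  have hn0 : (n : ℝ) ≠ 0 := by positivity
  have : (n : ℝ) * (∑ z ∈ crdSet n, ind (z i)) = (n:ℝ) * (((crdSet n).card : ℝ) / 2) := by
    rw [hsum]; rw [← h2]; ring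
  exact mul_left_cancel₀ hn0 this


lemma sum_ind_pair {n : ℕ} (hn : 2 ≤ n) (hev : Even n) {i j : Fin n} (hij : i ≠ j) :
    ∑ z ∈ crdSet n, ind (z i) * ind (z j)
      = ((crdSet n).card : ℝ) * (((n / 2 : ℕ) : ℝ) - 1) / (2 * ((n : ℝ) - 1)) := by
  set K : ℝ := ((crdSet n).card : ℝ) with hK
  have hconst : ∀ j' : Fin n, j' ≠ i →
      ∑ z ∈ crdSet n, ind (z i) * ind (z j') = ∑ z ∈ crdSet n, ind (z i) * ind (z j) := by
    intro j' hj'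
    have := sum_comp_perm (Equiv.swap j j') (fun z => ind (z i) * ind (z j))
    simp only [Equiv.swap_apply_left] at this
    rw [show (Equiv.swap j j') i = i from Equiv.swap_apply_of_ne_of_ne hij (Ne.symm hj')] at this
    exact this
  have hkey : ((n : ℝ) - 1) * (∑ z ∈ crdSet n, ind (z i) * ind (z j))
      = (((n / 2 : ℕ) : ℝ) - 1) * (K / 2) := by
    calc ((n : ℝ) - 1) * (∑ z ∈ crdSet n, ind (z i) * ind (z j))
        = ∑ j' ∈ Finset.univ.erase i, ∑ z ∈ crdSet n, ind (z i) * ind (z j') := by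
          rw [Finset.sum_congr rfl fun j' hj' => hconst j' (Finset.ne_of_mem_erase hj'),
            Finset.sum_const, Finset.card_erase_of_mem (mem_univ i), Finset.card_univ,
            Fintype.card_fin]
          rw [nsmul_eq_mul, Nat.cast_sub (by omega)]
          norm_num
      _ = ∑ z ∈ crdSet n, ∑ j' ∈ Finset.univ.erase i, ind (z i) * ind (z j') :=
          Finset.sum_comm
      _ = ∑ z ∈ crdSet n, ind (z i) * (((n / 2 : ℕ) : ℝ) - ind (z i)) := by
          refine Finset.sum_congr rfl fun z hz => ?_
          rw [← Finset.mul_sum, Finset.sum_erase_eq_sub (mem_univ i), sum_ind_mem hz]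
      _ = ∑ z ∈ crdSet n, (((n / 2 : ℕ) : ℝ) - 1) * ind (z i) := by
          refine Finset.sum_congr rfl fun z _ => ?_
          cases z i <;> simp [ind] <;> ring_nf
      _ = (((n / 2 : ℕ) : ℝ) - 1) * (K / 2) := by
          rw [← Finset.mul_sum, sum_ind hn hev i]
  have hn1 : (n : ℝ) - 1 ≠ 0 := by
    have : (2 : ℝ) ≤ (n : ℝ) := by exact_mod_cast hn
    linarith
  field_simp at hkey ⊢
  linarith [hkey]


lemma sum_w {n : ℕ} (hn : 2 ≤ n) (hev : Even n) (i j : Fin n) :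
    ∑ z ∈ crdSet n, (ind (z i) - 1/2) * (ind (z j) - 1/2)
      = if i = j then ((crdSet n).card : ℝ) / 4
        else -((crdSet n).card : ℝ) / (4 * ((n : ℝ) - 1)) := by
  set K : ℝ := ((crdSet n).card : ℝ) with hKdef
  have hn1 : (n : ℝ) - 1 ≠ 0 := by
    have : (2 : ℝ) ≤ (n : ℝ) := by exact_mod_cast hn
    linarith
  by_cases h : i = j
  · subst h
    rw [Finset.sum_congr rfl (fun z _ => show (ind (z i) - 1/2) * (ind (z i) - 1/2) = 1/4 by
      cases z i <;> norm_num [ind])]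
    rw [Finset.sum_const, nsmul_eq_mul, if_pos rfl, hKdef]
    ring
  · simp only [if_neg h]
    have expand : ∀ z : Fin n → Bool, (ind (z i) - 1/2) * (ind (z j) - 1/2)
        = ind (z i) * ind (z j) - (1/2) * ind (z i) - (1/2) * ind (z j) + 1/4 := by
      intro z; ring
    rw [Finset.sum_congr rfl fun z _ => expand z]
    rw [Finset.sum_add_distrib, Finset.sum_sub_distrib, Finset.sum_sub_distrib,
      ← Finset.mul_sum, ← Finset.mul_sum, sum_ind hn hev i, sum_ind hn hev j,
      sum_ind_pair hn hev h, Finset.sum_const, nsmul_eq_mul]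
    have h2 := half_cast hev
    field_simp
    linear_combination 4 * K * h2


lemma var_formula {n : ℕ} (hn : 2 ≤ n) (hev : Even n) (d : Fin n → ℝ) :
    ∑ z ∈ crdSet n, (∑ i, d i * (ind (z i) - 1/2))^2
      = ((crdSet n).card : ℝ) * ((n : ℝ) * (∑ i, d i ^ 2) - (∑ i, d i)^2)
          / (4 * ((n : ℝ) - 1)) := by
  set K : ℝ := ((crdSet n).card : ℝ) with hKdef
  have hn1 : (n : ℝ) - 1 ≠ 0 := by
    have : (2 : ℝ) ≤ (n : ℝ) := by exact_mod_cast hn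
    linarith
  have step1 : ∑ z ∈ crdSet n, (∑ i, d i * (ind (z i) - 1/2))^2
      = ∑ i, ∑ j, d i * d j *
          (∑ z ∈ crdSet n, (ind (z i) - 1/2) * (ind (z j) - 1/2)) := by
    calc ∑ z ∈ crdSet n, (∑ i, d i * (ind (z i) - 1/2))^2
        = ∑ z ∈ crdSet n, ∑ i, ∑ j,
            (d i * (ind (z i) - 1/2)) * (d j * (ind (z j) - 1/2)) := by
          refine Finset.sum_congr rfl fun z _ => ?_
          rw [sq, Finset.sum_mul_sum]
      _ = ∑ i, ∑ j, ∑ z ∈ crdSet n,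
            (d i * (ind (z i) - 1/2)) * (d j * (ind (z j) - 1/2)) := by
          rw [Finset.sum_comm]
          exact Finset.sum_congr rfl fun i _ => Finset.sum_comm
      _ = ∑ i, ∑ j, d i * d j *
            (∑ z ∈ crdSet n, (ind (z i) - 1/2) * (ind (z j) - 1/2)) := by
          refine Finset.sum_congr rfl fun i _ => Finset.sum_congr rfl fun j _ => ?_
          rw [Finset.mul_sum]
          exact Finset.sum_congr rfl fun z _ => by ring
  rw [step1]
  have step2 : ∀ i j : Fin n, d i * d j *
      (∑ z ∈ crdSet n, (ind (z i) - 1/2) * (ind (z j) - 1/2))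
      = d i * d j * (-K / (4 * ((n : ℝ) - 1)))
        + (if i = j then d i * d j * (K/4 + K / (4 * ((n : ℝ) - 1))) else 0) := by
    intro i j
    rw [sum_w hn hev i j]
    by_cases h : i = j
    · subst h
      split_ifs with hii
      · ring
      · exact absurd rfl hii
    · simp only [if_neg h]; ring
  rw [Finset.sum_congr rfl fun i _ => Finset.sum_congr rfl fun j _ => step2 i j]
  have step3 : ∀ i : Fin n,
      (∑ j, (d i * d j * (-K / (4 * ((n : ℝ) - 1)))
        + (if i = j then d i * d j * (K/4 + K / (4 * ((n : ℝ) - 1))) else 0)))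
      = (∑ j, d i * d j * (-K / (4 * ((n : ℝ) - 1))))
        + d i * d i * (K/4 + K / (4 * ((n : ℝ) - 1))) := by
    intro i
    rw [Finset.sum_add_distrib, Finset.sum_ite_eq univ i
      (fun j => d i * d j * (K/4 + K / (4 * ((n : ℝ) - 1))))]
    simp
  rw [Finset.sum_congr rfl fun i _ => step3 i, Finset.sum_add_distrib]
  have step4 : ∑ i : Fin n, ∑ j : Fin n, d i * d j * (-K / (4 * ((n : ℝ) - 1)))
      = (∑ i, d i)^2 * (-K / (4 * ((n : ℝ) - 1))) := by
    rw [sq, Finset.sum_mul_sum, Finset.sum_mul]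
    exact Finset.sum_congr rfl fun i _ => by rw [Finset.sum_mul]
  rw [step4]
  have step5 : ∑ i : Fin n, d i * d i * (K/4 + K / (4 * ((n : ℝ) - 1)))
      = (∑ i, d i ^ 2) * (K/4 + K / (4 * ((n : ℝ) - 1))) := by
    rw [Finset.sum_mul]
    exact Finset.sum_congr rfl fun i _ => by rw [sq]
  rw [step5]
  field_simp
  ring


lemma sum_center_sq {n : ℕ} (hn : 1 ≤ n) (f : Fin n → ℝ) :
    ∑ i, (f i - (∑ k, f k)/n)^2 = (∑ i, f i^2) - (∑ i, f i)^2/n := by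
  have hn0 : (n:ℝ) ≠ 0 := Nat.cast_ne_zero.mpr (by omega)
  set S := ∑ k, f k with hS
  calc ∑ i, (f i - S/n)^2
      = ∑ i, (f i^2 - (2*S/n)*f i + (S/n)^2) :=
        Finset.sum_congr rfl fun i _ => by ring
    _ = (∑ i, f i^2) - (2*S/n)*S + (n:ℝ)*((S/n)^2) := by
        rw [Finset.sum_add_distrib, Finset.sum_sub_distrib, ← Finset.mul_sum,
          Finset.sum_const, card_univ, Fintype.card_fin, nsmul_eq_mul, ← hS]
    _ = (∑ i, f i^2) - S^2/n := by field_simp; ring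

lemma sum_sq_le_sq_sum_abs {n : ℕ} (e : Fin n → ℝ) :
    ∑ i, (e i)^2 ≤ (∑ i, |e i|)^2 := by
  have h : ∀ i : Fin n, (e i)^2 ≤ |e i| * (∑ j, |e j|) := by
    intro i
    have h1 : |e i| ≤ ∑ j, |e j| :=
      Finset.single_le_sum (fun j _ => abs_nonneg (e j)) (mem_univ i)
    calc (e i)^2 = |e i| * |e i| := by rw [abs_mul_abs_self, sq]
      _ ≤ |e i| * (∑ j, |e j|) := mul_le_mul_of_nonneg_left h1 (abs_nonneg _)
  calc ∑ i, (e i)^2 ≤ ∑ i, |e i| * (∑ j, |e j|) := Finset.sum_le_sum fun i _ => h i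
    _ = (∑ i, |e i|)^2 := by rw [← Finset.sum_mul, sq]

/-- For `n ≥ 2` even, `Yᵢ` `L`-Lipschitz in the interference argument on `[0,1]`,
target level `ρ₀ ∈ [0,1]`, interference levels `ρᵢ ∈ [0,1]`, completely randomized design `Z`,
difference-in-means estimator `τ̂`, `aᵢ = Yᵢ(1,ρ₀) + Yᵢ(0,ρ₀)` with mean `ā`, sample variance
`S[a] = (n-1)⁻¹ Σᵢ (aᵢ-ā)²`, `Y_max = maxᵢ |aᵢ - ā|`, and `Δ₁ = Σᵢ |ρᵢ - ρ₀|`: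
`|Var[τ̂] - (1/n)·S[a]| ≤ (4/(n(n-1)))·(L·Y_max·Δ₁ + L²·Δ₁²)`. -/
theorem stmt_9 (n : ℕ) (hn : 2 ≤ n) (hev : Even n)
    (Y : Fin n → Bool → ℝ → ℝ) (L : ℝ)
    (hLip : ∀ i (b : Bool), ∀ ρ₁ ∈ Set.Icc (0 : ℝ) 1, ∀ ρ₂ ∈ Set.Icc (0 : ℝ) 1,
      |Y i b ρ₁ - Y i b ρ₂| ≤ L * |ρ₁ - ρ₂|)
    (ρ₀ : ℝ) (hρ₀ : ρ₀ ∈ Set.Icc (0 : ℝ) 1)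
    (ρ : Fin n → ℝ) (hρ : ∀ i, ρ i ∈ Set.Icc (0 : ℝ) 1)
    (τhat : (Fin n → Bool) → ℝ)
    (hτ : ∀ z, τhat z = (2 / n) * (∑ i, Y i (z i) (ρ i) * ind (z i))
                      - (2 / n) * (∑ i, Y i (z i) (ρ i) * (1 - ind (z i))))
    (a : Fin n → ℝ) (ha : ∀ i, a i = Y i true ρ₀ + Y i false ρ₀)
    (Ymax : ℝ) (hYmax : IsGreatest (Set.range fun i => |a i - (∑ k, a k) / n|) Ymax)
    (Δ₁ : ℝ) (hΔ₁ : Δ₁ = ∑ i, |ρ i - ρ₀|) :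
    |crdExp n (fun z => (τhat z - crdExp n τhat) ^ 2)
        - (1 / n) * ((∑ i, (a i - (∑ k, a k) / n) ^ 2) / ((n : ℝ) - 1))|
      ≤ (4 / (n * ((n : ℝ) - 1))) * (L * Ymax * Δ₁ + L ^ 2 * Δ₁ ^ 2) := by
  have hnR : (2:ℝ) ≤ (n:ℝ) := by exact_mod_cast hn
  have hnpos : (0:ℝ) < n := by linarith
  have hn0 : (n:ℝ) ≠ 0 := ne_of_gt hnpos
  have hn1pos : (0:ℝ) < (n:ℝ) - 1 := by linarith
  have hn1 : (n:ℝ) - 1 ≠ 0 := ne_of_gt hn1pos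
  have hKpos : (0:ℝ) < ((crdSet n).card : ℝ) := by
    exact_mod_cast Finset.card_pos.mpr (crd_nonempty hn)
  have hK0 : ((crdSet n).card : ℝ) ≠ 0 := ne_of_gt hKpos
  set K : ℝ := ((crdSet n).card : ℝ) with hKdef
  set d : Fin n → ℝ := fun i => Y i true (ρ i) + Y i false (ρ i) with hd
  set c : Fin n → ℝ := fun i => Y i false (ρ i) with hc
  -- rewrite the estimator
  have hτ2 : ∀ z : Fin n → Bool,
      τhat z = (2/(n:ℝ)) * (∑ i, d i * ind (z i)) - (2/(n:ℝ)) * (∑ i, c i) := by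
    intro z
    rw [hτ z, ← mul_sub, ← mul_sub, ← Finset.sum_sub_distrib, ← Finset.sum_sub_distrib]
    congr 1
    refine Finset.sum_congr rfl fun i _ => ?_
    cases hzi : z i <;> simp [ind, hd, hc] <;> ring
  -- expectation of the estimator
  have hE : crdExp n τhat = (2/(n:ℝ)) * ((∑ i, d i)/2) - (2/(n:ℝ)) * (∑ i, c i) := by
    unfold crdExp
    rw [Finset.sum_congr rfl fun z _ => hτ2 z]
    rw [Finset.sum_sub_distrib, ← Finset.mul_sum, Finset.sum_comm, Finset.sum_const]
    have : ∑ i : Fin n, ∑ z ∈ crdSet n, d i * ind (z i) = (∑ i, d i) * (K/2) := by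
      rw [Finset.sum_mul]
      refine Finset.sum_congr rfl fun i _ => ?_
      rw [← Finset.mul_sum, sum_ind hn hev i]
    rw [this, nsmul_eq_mul, ← hKdef]
    field_simp
  -- centered estimator
  have hg : ∀ z : Fin n → Bool,
      τhat z - crdExp n τhat = (2/(n:ℝ)) * ∑ i, d i * (ind (z i) - 1/2) := by
    intro z
    rw [hτ2 z, hE]
    have : ∑ i, d i * (ind (z i) - 1/2) = (∑ i, d i * ind (z i)) - (∑ i, d i)/2 := by
      rw [Finset.sum_congr rfl fun i _ => (mul_sub (d i) (ind (z i)) (1/2)),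
        Finset.sum_sub_distrib]
      congr 1
      rw [Finset.sum_div]
      exact Finset.sum_congr rfl fun i _ => by ring
    rw [this]
    ring
  -- variance formula
  have hVar : crdExp n (fun z => (τhat z - crdExp n τhat) ^ 2)
      = ((n:ℝ) * (∑ i, d i ^ 2) - (∑ i, d i)^2) / ((n:ℝ)^2 * ((n:ℝ) - 1)) := by
    have hfun : crdExp n (fun z => (τhat z - crdExp n τhat) ^ 2)
        = crdExp n (fun z => (2/(n:ℝ))^2 * (∑ i, d i * (ind (z i) - 1/2))^2) := by
      congr 1
      funext z
      rw [hg z, mul_pow]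
    rw [hfun]
    unfold crdExp
    rw [← Finset.mul_sum, var_formula hn hev d, ← hKdef]
    field_simp
    ring
  -- second moment of a
  set A : ℝ := ∑ k, a k with hA
  have hSa : ∑ i, (a i - A/(n:ℝ))^2 = (∑ i, a i^2) - A^2/(n:ℝ) := sum_center_sq (by omega) a
  -- error terms
  set e : Fin n → ℝ := fun i => d i - a i with he
  set E : ℝ := ∑ i, e i with hE2
  have hEeq : E = (∑ i, d i) - A := by rw [hE2, hA, Finset.sum_sub_distrib]
  have hSe : ∑ i, (e i - E/(n:ℝ))^2 = (∑ i, e i^2) - E^2/(n:ℝ) := by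
    have := sum_center_sq (n := n) (by omega) e
    rwa [← hE2] at this
  have hSe2 : ∑ i, e i^2 = (∑ i, d i^2) - 2*(∑ i, a i * d i) + (∑ i, a i^2) := by
    rw [Finset.sum_congr rfl fun i (_ : i ∈ univ) =>
      show e i^2 = d i^2 - 2*(a i * d i) + a i^2 from by simp only [he]; ring]
    rw [Finset.sum_add_distrib, Finset.sum_sub_distrib, ← Finset.mul_sum]
  have hαe : ∑ i, (a i - A/(n:ℝ)) * e i
      = (∑ i, a i * d i) - (∑ i, a i^2) - (A/(n:ℝ))*(∑ i, d i) + (A/(n:ℝ))*A := by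
    rw [Finset.sum_congr rfl fun i (_ : i ∈ univ) =>
      show (a i - A/(n:ℝ)) * e i
          = a i * d i - a i^2 - (A/(n:ℝ))*(d i) + (A/(n:ℝ))*(a i) from by
        simp only [he]; ring]
    rw [Finset.sum_add_distrib, Finset.sum_sub_distrib, Finset.sum_sub_distrib,
      ← Finset.mul_sum, ← Finset.mul_sum, ← hA]
  have hdiff : crdExp n (fun z => (τhat z - crdExp n τhat) ^ 2)
      - (1 / (n:ℝ)) * ((∑ i, (a i - A / (n:ℝ)) ^ 2) / ((n : ℝ) - 1))
      = (2*(∑ i, (a i - A/(n:ℝ)) * e i) + ∑ i, (e i - E/(n:ℝ))^2)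
          / ((n:ℝ)*((n:ℝ)-1)) := by
    rw [hVar, hSa, hαe, hSe, hSe2, hEeq]
    field_simp
    ring
  -- bounds
  have hL0 : 0 ≤ L := by
    have h01 : (0:ℝ) ∈ Set.Icc (0:ℝ) 1 := by norm_num
    have h11 : (1:ℝ) ∈ Set.Icc (0:ℝ) 1 := by norm_num
    have hLb := hLip ⟨0, by omega⟩ true 0 h01 1 h11
    have habs : |(0:ℝ) - 1| = 1 := by norm_num
    rw [habs, mul_one] at hLb
    exact le_trans (abs_nonneg _) hLb
  have he_bound : ∀ i, |e i| ≤ 2*L*|ρ i - ρ₀| := by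
    intro i
    have h1 := hLip i true (ρ i) (hρ i) ρ₀ hρ₀
    have h2 := hLip i false (ρ i) (hρ i) ρ₀ hρ₀
    have hei : e i = (Y i true (ρ i) - Y i true ρ₀) + (Y i false (ρ i) - Y i false ρ₀) := by
      simp only [he, hd]; rw [ha i]; ring
    rw [hei]
    calc |(Y i true (ρ i) - Y i true ρ₀) + (Y i false (ρ i) - Y i false ρ₀)|
        ≤ |Y i true (ρ i) - Y i true ρ₀| + |Y i false (ρ i) - Y i false ρ₀| := abs_add_le _ _
      _ ≤ L*|ρ i - ρ₀| + L*|ρ i - ρ₀| := add_le_add h1 h2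
      _ = 2*L*|ρ i - ρ₀| := by ring
  have hsum_e : ∑ i, |e i| ≤ 2*L*Δ₁ := by
    rw [hΔ₁, Finset.mul_sum]
    exact Finset.sum_le_sum fun i _ => he_bound i
  have hsum_e_nonneg : 0 ≤ ∑ i, |e i| := Finset.sum_nonneg fun i _ => abs_nonneg _
  have hYnn : 0 ≤ Ymax := by
    have := hYmax.2 ⟨(⟨0, by omega⟩ : Fin n), rfl⟩
    exact le_trans (abs_nonneg _) this
  have hα : ∀ i, |a i - A/(n:ℝ)| ≤ Ymax := fun i => hYmax.2 ⟨i, rfl⟩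
  have hb1 : |∑ i, (a i - A/(n:ℝ)) * e i| ≤ Ymax * (2*L*Δ₁) := by
    calc |∑ i, (a i - A/(n:ℝ)) * e i|
        ≤ ∑ i, |(a i - A/(n:ℝ)) * e i| := Finset.abs_sum_le_sum_abs _ _
      _ = ∑ i, |a i - A/(n:ℝ)| * |e i| :=
          Finset.sum_congr rfl fun i _ => abs_mul _ _
      _ ≤ ∑ i, Ymax * |e i| :=
          Finset.sum_le_sum fun i _ => mul_le_mul_of_nonneg_right (hα i) (abs_nonneg _)
      _ = Ymax * ∑ i, |e i| := by rw [Finset.mul_sum]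
      _ ≤ Ymax * (2*L*Δ₁) := mul_le_mul_of_nonneg_left hsum_e hYnn
  have hb2 : ∑ i, (e i - E/(n:ℝ))^2 ≤ 4*L^2*Δ₁^2 := by
    rw [hSe]
    have h1 : ∑ i, e i^2 ≤ (∑ i, |e i|)^2 := sum_sq_le_sq_sum_abs e
    have h2 : (∑ i, |e i|)^2 ≤ (2*L*Δ₁)^2 := pow_le_pow_left₀ hsum_e_nonneg hsum_e 2
    have h3 : 0 ≤ E^2/(n:ℝ) := by positivity
    have h4 : (2*L*Δ₁)^2 = 4*L^2*Δ₁^2 := by ring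
    linarith [h1, h2, h3, h4]
  have hb2' : 0 ≤ ∑ i, (e i - E/(n:ℝ))^2 := Finset.sum_nonneg fun i _ => sq_nonneg _
  rw [hdiff]
  have hDpos : (0:ℝ) < (n:ℝ)*((n:ℝ)-1) := by positivity
  rw [abs_div, abs_of_pos hDpos]
  have hnum : |2*(∑ i, (a i - A/(n:ℝ)) * e i) + ∑ i, (e i - E/(n:ℝ))^2|
      ≤ 4*(L*Ymax*Δ₁ + L^2*Δ₁^2) := by
    calc |2*(∑ i, (a i - A/(n:ℝ)) * e i) + ∑ i, (e i - E/(n:ℝ))^2|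
        ≤ |2*(∑ i, (a i - A/(n:ℝ)) * e i)| + |∑ i, (e i - E/(n:ℝ))^2| := abs_add_le _ _
      _ = 2*|∑ i, (a i - A/(n:ℝ)) * e i| + ∑ i, (e i - E/(n:ℝ))^2 := by
          rw [abs_mul, abs_of_nonneg hb2', abs_of_nonneg (by norm_num : (0:ℝ) ≤ 2)]
      _ ≤ 2*(Ymax * (2*L*Δ₁)) + 4*L^2*Δ₁^2 :=
          add_le_add (by linarith [hb1]) hb2
      _ = 4*(L*Ymax*Δ₁ + L^2*Δ₁^2) := by ring
  have hrhs : (4/((n:ℝ)*((n:ℝ)-1))) * (L*Ymax*Δ₁ + L^2*Δ₁^2)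
      = (4*(L*Ymax*Δ₁ + L^2*Δ₁^2))/((n:ℝ)*((n:ℝ)-1)) := by ring
  rw [hrhs]
  exact (div_le_div_iff_of_pos_right hDpos).mpr hnum
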